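/- Let (D,d) be a noncomplete rectifiably connected metric space that is length a-John with center x₀. Then for every x₁ ∈ D there is a curve α joining x₁ to x₀ such that α is a diameter a-carrot arc (diam(α[x₁,z]) ≤ a·d(z) for all z ∈ α) and α satisfies the φ-natural condition diam_k(α[x₁,y]) ≤ φ(diam(α[x₁,y]) / dist(α[x₁,y], ∂D)) for all y ∈ α, where φ(t) = b₁ log(1+t) + b₂ with b₁, b₂ depending only on a. -/

import Mathlib

open Set Metric ENNReal

noncomputable section

variable {X : Type*} [MetricSpace X] {Y : Type*} [MetricSpace Y]

/-- Distance from a point `z` to the boundary of `D`, modeled as the distance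
to the complement of `D`. -/
def bdist (D : Set X) (z : X) : ℝ := Metric.infDist z Dᶜ

/-- Distance from a set `A` to the boundary of `D`. -/
def setBdist (D A : Set X) : ℝ := sInf (bdist D '' A)

/-- Quasihyperbolic length (variation) of `f` over the parameter set `s`, the
discretized version of `∫_γ |dz| / dist(z, ∂D)`. -/
def qhVariationOn (D : Set X) (f : ℝ → X) (s : Set ℝ) : ℝ≥0∞ :=
  ⨆ p : ℕ × { u : ℕ → ℝ // Monotone u ∧ ∀ i, u i ∈ s },
    ∑ i ∈ Finset.range p.1,
      edist (f (p.2.1 (i + 1))) (f (p.2.1 i)) /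
        max (ENNReal.ofReal (bdist D (f (p.2.1 i))))
            (ENNReal.ofReal (bdist D (f (p.2.1 (i + 1)))))

/-- `f : [0,1] → D` is a curve in `D` from `x` to `y`. -/
structure IsCurveIn (D : Set X) (f : ℝ → X) (x y : X) : Prop where
  cont : ContinuousOn f (Icc 0 1)
  mem : ∀ t ∈ Icc (0 : ℝ) 1, f t ∈ D
  source : f 0 = x
  target : f 1 = y

/-- Every pair of points of `D` can be joined by a rectifiable curve in `D`. -/
def RectifiablyConnected (D : Set X) : Prop :=
  ∀ x ∈ D, ∀ y ∈ D, ∃ f : ℝ → X, IsCurveIn D f x y ∧ eVariationOn f (Icc 0 1) < ⊤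

/-- The quasihyperbolic distance in `D`. -/
def qhDist (D : Set X) (x y : X) : ℝ≥0∞ :=
  ⨅ (f : ℝ → X) (_ : IsCurveIn D f x y ∧ eVariationOn f (Icc 0 1) < ⊤),
    qhVariationOn D f (Icc 0 1)

/-- Diameter of a set `A ⊆ D` with respect to the quasihyperbolic metric of `D`. -/
def qhDiam (D : Set X) (A : Set X) : ℝ≥0∞ := ⨆ x ∈ A, ⨆ y ∈ A, qhDist D x y

/-- `D` is a length `a`-John space with center `x₀`: every point can be joined to `x₀`
by an `a`-carrot arc, i.e. `ℓ(α[x,z]) ≤ a · dist(z, ∂D)` for every `z` on the arc. -/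
def IsLengthJohn (D : Set X) (a : ℝ) (x₀ : X) : Prop :=
  ∀ x ∈ D, ∃ f : ℝ → X, IsCurveIn D f x x₀ ∧
    ∀ t ∈ Icc (0 : ℝ) 1, eVariationOn f (Icc 0 t) ≤ ENNReal.ofReal (a * bdist D (f t))

/-- `D` is locally `(lam, c)`-quasiconvex: any two points of `B(x, lam·dist(x,∂D))`
can be joined by a `c`-quasiconvex curve in `D`. -/
def LocQuasiconvex (D : Set X) (lam c : ℝ) : Prop :=
  ∀ x ∈ D, ∀ y ∈ D, ∀ z ∈ D,
    dist y x < lam * bdist D x → dist z x < lam * bdist D x →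
      ∃ f : ℝ → X, IsCurveIn D f y z ∧
        eVariationOn f (Icc 0 1) ≤ ENNReal.ofReal (c * dist y z)

/-- `η` is a quasisymmetry control function: an increasing self-homeomorphism of `[0, ∞)`. -/
structure QSControl (η : ℝ → ℝ) : Prop where
  mono : StrictMonoOn η (Ici 0)
  cont : ContinuousOn η (Ici 0)
  zero : η 0 = 0
  surj : ∀ s : ℝ, 0 ≤ s → ∃ t : ℝ, 0 ≤ t ∧ η t = s

/-- `f` is `η`-quasisymmetric on `D`. -/
def IsQSOn (f : X → Y) (D : Set X) (η : ℝ → ℝ) : Prop :=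
  ∀ x ∈ D, ∀ a ∈ D, ∀ b ∈ D, ∀ t : ℝ, 0 ≤ t →
    dist x a ≤ t * dist x b → dist (f x) (f a) ≤ η t * dist (f x) (f b)

/-- `f` is a homeomorphism from `D` onto `D'` with inverse `g`. -/
def IsHomeoOn (f : X → Y) (g : Y → X) (D : Set X) (D' : Set Y) : Prop :=
  ContinuousOn f D ∧ ContinuousOn g D' ∧ MapsTo f D D' ∧ MapsTo g D' D ∧ InvOn g f D D'

namespace CarrotAux

lemma bdist_pos {X : Type*} [MetricSpace X] {D : Set X} (hD : IsOpen D) (hne : Dᶜ.Nonempty)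
    {z : X} (hz : z ∈ D) : 0 < bdist D z := by
  have := (hD.isClosed_compl.notMem_iff_infDist_pos hne).1 (by simpa using hz)
  simpa [bdist] using this

lemma sub_div_le_log {x y : ℝ} (hy : 0 < y) (hxy : y ≤ x) :
    (x - y) / x ≤ Real.log x - Real.log y := by
  have hx : 0 < x := hy.trans_le hxy
  have h := Real.log_le_sub_one_of_pos (x := y / x) (by positivity)
  rw [Real.log_div hy.ne' hx.ne'] at h
  have h2 : (x - y) / x = 1 - y / x := by field_simp
  linarith

/-- The potential function used to telescope quasihyperbolic sums on a carrot arc. -/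
def phi (a ds Ws x : ℝ) : ℝ :=
  2 / ds * (min x (Ws + ds / 2) - Ws) + a * Real.log (max x (Ws + ds / 2) / (Ws + ds / 2))

lemma phi_mono {a ds Ws : ℝ} (ha : 0 ≤ a) (hds : 0 < ds) (hWs : 0 ≤ Ws) :
    Monotone (phi a ds Ws) := by
  have hm : 0 < Ws + ds / 2 := by linarith
  intro x y hxy
  unfold phi
  have h1 : min x (Ws + ds / 2) ≤ min y (Ws + ds / 2) := min_le_min hxy le_rfl
  have h2 : Real.log (max x (Ws + ds / 2) / (Ws + ds / 2)) ≤
      Real.log (max y (Ws + ds / 2) / (Ws + ds / 2)) := by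
    apply Real.log_le_log (div_pos (lt_of_lt_of_le hm (le_max_right _ _)) hm)
    exact div_le_div_of_nonneg_right (max_le_max hxy le_rfl) hm.le
  have h3 : 0 < 2 / ds := by positivity
  nlinarith [mul_le_mul_of_nonneg_left h2 ha, mul_le_mul_of_nonneg_left (sub_le_sub_right h1 Ws) h3.le]

lemma phi_base {a ds Ws : ℝ} (hds : 0 < ds) (hWs : 0 ≤ Ws) : phi a ds Ws Ws = 0 := by
  have hm : 0 < Ws + ds / 2 := by linarith
  have h1 : min Ws (Ws + ds / 2) = Ws := min_eq_left (by linarith)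
  have h2 : max Ws (Ws + ds / 2) = Ws + ds / 2 := max_eq_right (by linarith)
  simp [phi, h1, h2, div_self hm.ne']

lemma term_le {a ds Ws Wi Wj di dj : ℝ} (ha : 1 ≤ a) (hds : 0 < ds) (hWs : 0 ≤ Ws)
    (hWsi : Ws ≤ Wi) (hij : Wi ≤ Wj) (hdi : 0 < di) (hdj : 0 < dj)
    (hcj : Wj ≤ a * dj) (hlip : ds ≤ di + (Wi - Ws)) :
    (Wj - Wi) / max di dj ≤ phi a ds Ws Wj - phi a ds Ws Wi := by
  have ha0 : (0:ℝ) < a := by linarith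
  set m : ℝ := Ws + ds / 2 with hm_def
  have hm : 0 < m := by simp only [hm_def]; linarith
  have hMi : di ≤ max di dj := le_max_left _ _
  have hMj : dj ≤ max di dj := le_max_right _ _
  have hM : 0 < max di dj := lt_of_lt_of_le hdi hMi
  rcases le_total Wj m with hA | hA'
  · -- Case A : Wj ≤ m
    have hWim : Wi ≤ m := hij.trans hA
    have hdi2 : ds / 2 ≤ di := by simp only [hm_def] at hWim; linarith
    have h1 : (Wj - Wi) / max di dj ≤ (Wj - Wi) / (ds / 2) :=
      div_le_div_of_nonneg_left (by linarith) (by positivity) (hdi2.trans hMi)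
    have h2 : phi a ds Ws Wj - phi a ds Ws Wi = 2 / ds * (Wj - Wi) := by
      unfold phi
      rw [min_eq_left hA, min_eq_left hWim, max_eq_right hA, max_eq_right hWim]
      ring
    rw [h2]
    calc (Wj - Wi) / max di dj ≤ (Wj - Wi) / (ds / 2) := h1
      _ = 2 / ds * (Wj - Wi) := by field_simp
  · rcases le_total m Wi with hB | hB'
    · -- Case B : m ≤ Wi
      have hWi0 : 0 < Wi := hm.trans_le hB
      have hWj0 : 0 < Wj := hWi0.trans_le hij
      have hdj' : Wj / a ≤ dj := by rw [div_le_iff₀ ha0]; linarith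
      have h1 : (Wj - Wi) / max di dj ≤ (Wj - Wi) / (Wj / a) :=
        div_le_div_of_nonneg_left (by linarith) (by positivity) (hdj'.trans hMj)
      have h2 : (Wj - Wi) / (Wj / a) = a * ((Wj - Wi) / Wj) := by
        field_simp
      have h3 : (Wj - Wi) / Wj ≤ Real.log Wj - Real.log Wi := sub_div_le_log hWi0 hij
      have h4 : phi a ds Ws Wj - phi a ds Ws Wi = a * (Real.log Wj - Real.log Wi) := by
        unfold phi
        rw [min_eq_right hB, min_eq_right (hB.trans hij), max_eq_left hB,
          max_eq_left (hB.trans hij), Real.log_div hWj0.ne' hm.ne',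
          Real.log_div hWi0.ne' hm.ne']
        ring
      rw [h4]
      calc (Wj - Wi) / max di dj ≤ (Wj - Wi) / (Wj / a) := h1
        _ = a * ((Wj - Wi) / Wj) := h2
        _ ≤ a * (Real.log Wj - Real.log Wi) := by
            exact mul_le_mul_of_nonneg_left h3 ha0.le
    · -- Case C : Wi ≤ m ≤ Wj
      have hWj0 : 0 < Wj := hm.trans_le hA'
      have hdi2 : ds / 2 ≤ di := by simp only [hm_def] at hB'; linarith
      have hdj' : Wj / a ≤ dj := by rw [div_le_iff₀ ha0]; linarith
      have h1 : (m - Wi) / max di dj ≤ (m - Wi) / (ds / 2) :=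
        div_le_div_of_nonneg_left (by linarith) (by positivity) (hdi2.trans hMi)
      have h2 : (Wj - m) / max di dj ≤ (Wj - m) / (Wj / a) :=
        div_le_div_of_nonneg_left (by linarith) (by positivity) (hdj'.trans hMj)
      have h3 : (Wj - m) / (Wj / a) = a * ((Wj - m) / Wj) := by field_simp
      have h4 : (Wj - m) / Wj ≤ Real.log Wj - Real.log m := sub_div_le_log hm hA'
      have h5 : phi a ds Ws Wj - phi a ds Ws Wi
          = 2 / ds * (m - Wi) + a * (Real.log Wj - Real.log m) := by
        unfold phi
        rw [min_eq_right hA', min_eq_left hB', max_eq_left hA', max_eq_right hB',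
          Real.log_div hWj0.ne' hm.ne', div_self hm.ne']
        simp [Real.log_one]
        ring
      have h6 : (m - Wi) / (ds / 2) = 2 / ds * (m - Wi) := by field_simp
      have hsplit : (Wj - Wi) / max di dj = (m - Wi) / max di dj + (Wj - m) / max di dj := by
        rw [← add_div]; ring_nf
      rw [h5, hsplit]
      have h7 : a * ((Wj - m) / Wj) ≤ a * (Real.log Wj - Real.log m) :=
        mul_le_mul_of_nonneg_left h4 ha0.le
      linarith [h1, h2, h3.le, h3.ge]

end CarrotAux


open CarrotAux in
lemma carrot_sum_le {X : Type} [MetricSpace X] {D : Set X} (hD : IsOpen D)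
    (hne : Dᶜ.Nonempty) {a : ℝ} (ha : 1 ≤ a) {f : ℝ → X}
    (hmem : ∀ r ∈ Icc (0:ℝ) 1, f r ∈ D)
    (hJ : ∀ r ∈ Icc (0:ℝ) 1, eVariationOn f (Icc 0 r) ≤ ENNReal.ofReal (a * bdist D (f r)))
    {s s' : ℝ} (hs : 0 ≤ s) (hss : s ≤ s') (hs1 : s' ≤ 1)
    {B : ℝ} (hB : CarrotAux.phi a (bdist D (f s)) ((eVariationOn f (Icc 0 s)).toReal)
        ((eVariationOn f (Icc 0 s')).toReal) ≤ B)
    (n : ℕ) (v : ℕ → ℝ) (hv : Monotone v) (hvmem : ∀ i, v i ∈ Icc s s') :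
    ∑ i ∈ Finset.range n,
      edist (f (v (i + 1))) (f (v i)) /
        max (ENNReal.ofReal (bdist D (f (v i)))) (ENNReal.ofReal (bdist D (f (v (i + 1))))) ≤
      ENNReal.ofReal B := by
  have hIcc : ∀ r ∈ Icc s s', r ∈ Icc (0:ℝ) 1 := fun r hr =>
    ⟨hs.trans hr.1, hr.2.trans hs1⟩
  have hsmem : s ∈ Icc (0:ℝ) 1 := ⟨hs, hss.trans hs1⟩
  have hfin : ∀ r ∈ Icc (0:ℝ) 1, eVariationOn f (Icc 0 r) ≠ ⊤ := fun r hr =>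
    ((hJ r hr).trans_lt ENNReal.ofReal_lt_top).ne
  set W : ℝ → ℝ := fun r => (eVariationOn f (Icc 0 r)).toReal with hW_def
  have hWmono : ∀ p q : ℝ, 0 ≤ p → p ≤ q → q ≤ 1 → W p ≤ W q := by
    intro p q hp hpq hq1
    exact ENNReal.toReal_mono (hfin q ⟨hp.trans hpq, hq1⟩)
      (eVariationOn.mono f (Icc_subset_Icc le_rfl hpq))
  have hsub : ∀ p q : ℝ, 0 ≤ p → p ≤ q → q ≤ 1 →
      eVariationOn f (Icc p q) = ENNReal.ofReal (W q - W p) := by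
    intro p q hp hpq hq1
    have h1 : eVariationOn f (Icc 0 p) + eVariationOn f (Icc p q) = eVariationOn f (Icc 0 q) := by
      simpa using eVariationOn.Icc_add_Icc f (s := (univ : Set ℝ)) hp hpq (mem_univ p)
    have hf2 : eVariationOn f (Icc p q) ≠ ⊤ := by
      intro h
      rw [h, add_top] at h1
      exact hfin q ⟨hp.trans hpq, hq1⟩ h1.symm
    have h2 : W p + (eVariationOn f (Icc p q)).toReal = W q := by
      rw [hW_def]
      simp only
      rw [← ENNReal.toReal_add (hfin p ⟨hp, hpq.trans hq1⟩) hf2, h1]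
    rw [← ENNReal.ofReal_toReal hf2]
    congr 1
    linarith
  have hdistle : ∀ p q : ℝ, 0 ≤ p → p ≤ q → q ≤ 1 → dist (f p) (f q) ≤ W q - W p := by
    intro p q hp hpq hq1
    have h1 : edist (f p) (f q) ≤ eVariationOn f (Icc p q) :=
      eVariationOn.edist_le f ⟨le_rfl, hpq⟩ ⟨hpq, le_rfl⟩
    rw [hsub p q hp hpq hq1] at h1
    have h2 : 0 ≤ W q - W p := sub_nonneg.2 (hWmono p q hp hpq hq1)
    rw [dist_edist]
    exact ENNReal.toReal_le_of_le_ofReal h2 h1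
  have hcar : ∀ r ∈ Icc (0:ℝ) 1, W r ≤ a * bdist D (f r) := fun r hr =>
    ENNReal.toReal_le_of_le_ofReal
      (mul_nonneg (by linarith) Metric.infDist_nonneg) (hJ r hr)
  set ds : ℝ := bdist D (f s) with hds_def
  have hds : 0 < ds := bdist_pos hD hne (hmem s hsmem)
  have hWs0 : 0 ≤ W s := ENNReal.toReal_nonneg
  -- pointwise bounds along the partition
  have hbpos : ∀ i, 0 < bdist D (f (v i)) := fun i =>
    bdist_pos hD hne (hmem _ (hIcc _ (hvmem i)))
  have hterm : ∀ i, edist (f (v (i + 1))) (f (v i)) /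
        max (ENNReal.ofReal (bdist D (f (v i)))) (ENNReal.ofReal (bdist D (f (v (i + 1))))) ≤
      ENNReal.ofReal (phi a ds (W s) (W (v (i + 1))) - phi a ds (W s) (W (v i))) := by
    intro i
    have hpq : v i ≤ v (i + 1) := hv (Nat.le_succ i)
    have hpi := hvmem i
    have hpj := hvmem (i + 1)
    have hp0 : 0 ≤ v i := hs.trans hpi.1
    have hq1 : v (i + 1) ≤ 1 := hpj.2.trans hs1
    have hWij : W (v i) ≤ W (v (i + 1)) := hWmono _ _ hp0 hpq hq1
    have hWsi : W s ≤ W (v i) := hWmono s (v i) hs hpi.1 ((hIcc _ hpi).2)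
    have hdi : 0 < bdist D (f (v i)) := hbpos i
    have hdj : 0 < bdist D (f (v (i + 1))) := hbpos (i + 1)
    have hcj : W (v (i + 1)) ≤ a * bdist D (f (v (i + 1))) := hcar _ (hIcc _ hpj)
    have hlip : ds ≤ bdist D (f (v i)) + (W (v i) - W s) := by
      have h1 : ds ≤ bdist D (f (v i)) + dist (f s) (f (v i)) := by
        rw [hds_def]
        calc bdist D (f s) ≤ bdist D (f (v i)) + dist (f s) (f (v i)) :=
          Metric.infDist_le_infDist_add_dist
        _ = _ := by rfl
      have h2 : dist (f s) (f (v i)) ≤ W (v i) - W s :=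
        hdistle s (v i) hs hpi.1 ((hIcc _ hpi).2)
      linarith
    have hedist : edist (f (v (i + 1))) (f (v i)) ≤ ENNReal.ofReal (W (v (i + 1)) - W (v i)) := by
      rw [← hsub (v i) (v (i + 1)) hp0 hpq hq1]
      exact eVariationOn.edist_le f ⟨hpq, le_rfl⟩ ⟨le_rfl, hpq⟩
    have hmax : max (ENNReal.ofReal (bdist D (f (v i)))) (ENNReal.ofReal (bdist D (f (v (i + 1)))))
        = ENNReal.ofReal (max (bdist D (f (v i))) (bdist D (f (v (i + 1))))) := by
      rcases le_total (bdist D (f (v i))) (bdist D (f (v (i + 1)))) with h | h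
      · rw [max_eq_right h, max_eq_right (ENNReal.ofReal_le_ofReal h)]
      · rw [max_eq_left h, max_eq_left (ENNReal.ofReal_le_ofReal h)]
    have hmaxpos : 0 < max (bdist D (f (v i))) (bdist D (f (v (i + 1)))) :=
      lt_of_lt_of_le hdi (le_max_left _ _)
    calc edist (f (v (i + 1))) (f (v i)) /
          max (ENNReal.ofReal (bdist D (f (v i)))) (ENNReal.ofReal (bdist D (f (v (i + 1)))))
        ≤ ENNReal.ofReal (W (v (i + 1)) - W (v i)) /
          ENNReal.ofReal (max (bdist D (f (v i))) (bdist D (f (v (i + 1))))) := by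
          rw [hmax]
          exact ENNReal.div_le_div_right hedist _
      _ = ENNReal.ofReal ((W (v (i + 1)) - W (v i)) /
          max (bdist D (f (v i))) (bdist D (f (v (i + 1))))) :=
          (ENNReal.ofReal_div_of_pos hmaxpos).symm
      _ ≤ ENNReal.ofReal (phi a ds (W s) (W (v (i + 1))) - phi a ds (W s) (W (v i))) := by
          apply ENNReal.ofReal_le_ofReal
          exact term_le ha hds hWs0 hWsi hWij hdi hdj hcj hlip
  have hphimono : Monotone (phi a ds (W s)) := phi_mono (by linarith) hds hWs0
  calc ∑ i ∈ Finset.range n,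
      edist (f (v (i + 1))) (f (v i)) /
        max (ENNReal.ofReal (bdist D (f (v i)))) (ENNReal.ofReal (bdist D (f (v (i + 1)))))
      ≤ ∑ i ∈ Finset.range n,
        ENNReal.ofReal (phi a ds (W s) (W (v (i + 1))) - phi a ds (W s) (W (v i))) :=
        Finset.sum_le_sum fun i _ => hterm i
    _ = ENNReal.ofReal (∑ i ∈ Finset.range n,
        (phi a ds (W s) (W (v (i + 1))) - phi a ds (W s) (W (v i)))) := by
        rw [ENNReal.ofReal_sum_of_nonneg]
        intro i _
        have := hphimono (hWmono (v i) (v (i+1)) (hs.trans (hvmem i).1) (hv (Nat.le_succ i))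
          ((hvmem (i+1)).2.trans hs1))
        linarith
    _ = ENNReal.ofReal (phi a ds (W s) (W (v n)) - phi a ds (W s) (W (v 0))) := by
        rw [Finset.sum_range_sub (fun i => phi a ds (W s) (W (v i)))]
    _ ≤ ENNReal.ofReal B := by
        apply ENNReal.ofReal_le_ofReal
        have h1 : phi a ds (W s) (W (v n)) ≤ phi a ds (W s) (W s') :=
          hphimono (hWmono (v n) s' (hs.trans (hvmem n).1) (hvmem n).2 hs1)
        have h2 : phi a ds (W s) (W s) ≤ phi a ds (W s) (W (v 0)) :=
          hphimono (hWmono s (v 0) hs (hvmem 0).1 ((hIcc _ (hvmem 0)).2))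
        have h3 : phi a ds (W s) (W s) = 0 := phi_base hds hWs0
        linarith

open CarrotAux in
lemma carrot_sum_le_antitone {X : Type} [MetricSpace X] {D : Set X} (hD : IsOpen D)
    (hne : Dᶜ.Nonempty) {a : ℝ} (ha : 1 ≤ a) {f : ℝ → X}
    (hmem : ∀ r ∈ Icc (0:ℝ) 1, f r ∈ D)
    (hJ : ∀ r ∈ Icc (0:ℝ) 1, eVariationOn f (Icc 0 r) ≤ ENNReal.ofReal (a * bdist D (f r)))
    {s s' : ℝ} (hs : 0 ≤ s) (hss : s ≤ s') (hs1 : s' ≤ 1)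
    {B : ℝ} (hB : CarrotAux.phi a (bdist D (f s)) ((eVariationOn f (Icc 0 s)).toReal)
        ((eVariationOn f (Icc 0 s')).toReal) ≤ B)
    (n : ℕ) (v : ℕ → ℝ) (hv : Antitone v) (hvmem : ∀ i, v i ∈ Icc s s') :
    ∑ i ∈ Finset.range n,
      edist (f (v (i + 1))) (f (v i)) /
        max (ENNReal.ofReal (bdist D (f (v i)))) (ENNReal.ofReal (bdist D (f (v (i + 1))))) ≤
      ENNReal.ofReal B := by
  set w : ℕ → ℝ := fun i => v (n - i) with hw_def
  have hwmono : Monotone w := fun i j hij => hv (Nat.sub_le_sub_left hij n)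
  have hwmem : ∀ i, w i ∈ Icc s s' := fun i => hvmem (n - i)
  have key := carrot_sum_le hD hne ha hmem hJ hs hss hs1 hB n w hwmono hwmem
  rw [← Finset.sum_range_reflect] at key
  refine le_trans (le_of_eq ?_) key
  apply Finset.sum_congr rfl
  intro i hi
  have hi' : i < n := Finset.mem_range.1 hi
  have e1 : w (n - 1 - i) = v (i + 1) := by
    simp only [hw_def]
    congr 1
    omega
  have e2 : w (n - 1 - i + 1) = v i := by
    simp only [hw_def]
    congr 1
    omega
  rw [e1, e2, edist_comm, max_comm]

end
/-- If `D` is length `a`-John with center `x₀`, then, with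
`φ(t) = b₁ log(1+t) + b₂` for constants `b₁, b₂` depending only on `a`, every `x₁ ∈ D`
joins `x₀` by a diameter `a`-carrot arc satisfying the `φ`-natural condition. -/
theorem exists_natural_diameter_carrot_of_isLengthJohn (a : ℝ) (ha : 1 ≤ a) :
    ∃ b₁ b₂ : ℝ, 0 < b₁ ∧ 0 < b₂ ∧
      ∀ (X : Type) [MetricSpace X], ∀ D : Set X, IsOpen D → Dᶜ.Nonempty →
        RectifiablyConnected D → ∀ x₀ ∈ D, IsLengthJohn D a x₀ →
        ∀ x₁ ∈ D, ∃ f : ℝ → X, IsCurveIn D f x₁ x₀ ∧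
          (∀ t ∈ Icc (0 : ℝ) 1,
            EMetric.diam (f '' Icc 0 t) ≤ ENNReal.ofReal (a * bdist D (f t))) ∧
          ∀ t ∈ Icc (0 : ℝ) 1,
            qhDiam D (f '' Icc 0 t) ≤ ENNReal.ofReal
              (b₁ * Real.log (1 + (EMetric.diam (f '' Icc 0 t)).toReal /
                setBdist D (f '' Icc 0 t)) + b₂) := by
  classical
  refine ⟨a, 1 + a * Real.log (2 * (a + 1)), by linarith, ?_, ?_⟩
  · have h1 : 0 ≤ Real.log (2 * (a + 1)) := Real.log_nonneg (by linarith)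
    nlinarith
  intro X _ D hD hne _hrc x₀ hx₀ hJohn x₁ hx₁
  obtain ⟨f, hf, hJ⟩ := hJohn x₁ hx₁
  have hdiam : ∀ t ∈ Icc (0:ℝ) 1,
      EMetric.diam (f '' Icc 0 t) ≤ ENNReal.ofReal (a * bdist D (f t)) := by
    intro t ht
    apply EMetric.diam_le
    rintro x ⟨p, hp, rfl⟩ y ⟨q, hq, rfl⟩
    exact (eVariationOn.edist_le f hp hq).trans (hJ t ht)
  refine ⟨f, hf, hdiam, ?_⟩
  intro t ht
  set T := f '' Icc 0 t with hT_def
  set Δ := (EMetric.diam T).toReal with hΔ_def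
  set β := setBdist D T with hβ_def
  have hsub01 : Icc (0:ℝ) t ⊆ Icc 0 1 := Icc_subset_Icc le_rfl ht.2
  have hTD : ∀ z ∈ T, z ∈ D := by rintro z ⟨p, hp, rfl⟩; exact hf.mem p (hsub01 hp)
  have hTne : T.Nonempty := ⟨f 0, mem_image_of_mem _ ⟨le_rfl, ht.1⟩⟩
  have hTcomp : IsCompact T := isCompact_Icc.image_of_continuousOn (hf.cont.mono hsub01)
  have hdiamne : EMetric.diam T ≠ ⊤ := ((hdiam t ht).trans_lt ENNReal.ofReal_lt_top).ne
  have hΔ0 : 0 ≤ Δ := ENNReal.toReal_nonneg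
  have hbddBelow : BddBelow (bdist D '' T) :=
    ⟨0, by rintro _ ⟨w, hw, rfl⟩; exact Metric.infDist_nonneg⟩
  have hβmem : β ∈ bdist D '' T := by
    have himg : IsCompact (bdist D '' T) :=
      hTcomp.image (Metric.continuous_infDist_pt Dᶜ)
    exact himg.sInf_mem (hTne.image _)
  have hβpos : 0 < β := by
    obtain ⟨z, hz, hze⟩ := hβmem
    rw [← hze]
    exact CarrotAux.bdist_pos hD hne (hTD z hz)
  have hβle : ∀ z ∈ T, β ≤ bdist D z := fun z hz =>
    csInf_le hbddBelow (mem_image_of_mem _ hz)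
  have hble : ∀ z ∈ T, bdist D z ≤ β + Δ := by
    intro z hz
    have h1 : ∀ y ∈ bdist D '' T, bdist D z - Δ ≤ y := by
      rintro _ ⟨w, hw, rfl⟩
      have hd : dist z w ≤ Δ := by
        rw [dist_edist]
        exact ENNReal.toReal_mono hdiamne (EMetric.edist_le_diam_of_mem hz hw)
      have h2 : bdist D z ≤ bdist D w + dist z w := Metric.infDist_le_infDist_add_dist
      linarith
    have h2 : bdist D z - Δ ≤ β := le_csInf (hTne.image _) h1
    linarith
  have hphi : ∀ s s' : ℝ, s ∈ Icc 0 t → s' ∈ Icc 0 t → s ≤ s' →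
      CarrotAux.phi a (bdist D (f s)) ((eVariationOn f (Icc 0 s)).toReal)
        ((eVariationOn f (Icc 0 s')).toReal)
        ≤ a * Real.log (1 + Δ / β) + (1 + a * Real.log (2 * (a + 1))) := by
    intro s s' hsmem hs'mem hss
    have hfsT : f s ∈ T := mem_image_of_mem f hsmem
    have hfs'T : f s' ∈ T := mem_image_of_mem f hs'mem
    set ds := bdist D (f s) with hds_def
    set Ws := (eVariationOn f (Icc 0 s)).toReal with hWs_def
    set W' := (eVariationOn f (Icc 0 s')).toReal with hW'_def
    have hds : 0 < ds := CarrotAux.bdist_pos hD hne (hTD _ hfsT)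
    have hβds : β ≤ ds := hβle _ hfsT
    have hdsβΔ : ds ≤ β + Δ := hble _ hfsT
    have hds' : bdist D (f s') ≤ β + Δ := hble _ hfs'T
    have hWs0 : 0 ≤ Ws := ENNReal.toReal_nonneg
    have ha0 : (0:ℝ) ≤ a := by linarith
    have hcarWs : Ws ≤ a * ds :=
      ENNReal.toReal_le_of_le_ofReal (mul_nonneg ha0 Metric.infDist_nonneg)
        (hJ s (hsub01 hsmem))
    have hcarW' : W' ≤ a * bdist D (f s') :=
      ENNReal.toReal_le_of_le_ofReal (mul_nonneg ha0 Metric.infDist_nonneg)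
        (hJ s' (hsub01 hs'mem))
    unfold CarrotAux.phi
    set m := Ws + ds / 2 with hm_def
    have hm : 0 < m := by rw [hm_def]; linarith
    have hmβ : β / 2 ≤ m := by rw [hm_def]; linarith
    have hβΔ0 : 0 ≤ β + Δ := by linarith
    have hmax0 : 0 ≤ max W' m := hm.le.trans (le_max_right _ _)
    have hmax_le : max W' m ≤ (a + 1) * (β + Δ) := by
      apply max_le
      · nlinarith
      · rw [hm_def]; nlinarith
    have harg : max W' m / m ≤ 2 * (a + 1) * (1 + Δ / β) := by
      calc max W' m / m ≤ max W' m / (β / 2) :=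
            div_le_div_of_nonneg_left hmax0 (by positivity) hmβ
        _ ≤ ((a + 1) * (β + Δ)) / (β / 2) :=
            div_le_div_of_nonneg_right hmax_le (by positivity)
        _ = 2 * (a + 1) * (1 + Δ / β) := by field_simp
    have hargpos : 0 < max W' m / m := div_pos (lt_of_lt_of_le hm (le_max_right _ _)) hm
    have hΔβ0 : 0 ≤ Δ / β := div_nonneg hΔ0 hβpos.le
    have hlog : Real.log (max W' m / m) ≤ Real.log (2 * (a + 1)) + Real.log (1 + Δ / β) := by
      calc Real.log (max W' m / m) ≤ Real.log (2 * (a + 1) * (1 + Δ / β)) :=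
            Real.log_le_log hargpos harg
        _ = Real.log (2 * (a + 1)) + Real.log (1 + Δ / β) :=
            Real.log_mul (by nlinarith) (by nlinarith)
    have ht1 : 2 / ds * (min W' m - Ws) ≤ 1 := by
      have h1 : min W' m - Ws ≤ ds / 2 := by
        have := min_le_right W' m
        rw [hm_def] at this ⊢
        linarith
      have h2 : 0 < 2 / ds := by positivity
      calc 2 / ds * (min W' m - Ws) ≤ 2 / ds * (ds / 2) :=
            mul_le_mul_of_nonneg_left h1 h2.le
        _ = 1 := by field_simp
    have := mul_le_mul_of_nonneg_left hlog ha0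
    linarith
  show qhDiam D T ≤ _
  unfold qhDiam
  apply iSup₂_le
  rintro x ⟨p, hp, rfl⟩
  apply iSup₂_le
  rintro y ⟨q, hq, rfl⟩
  have hp01 : p ∈ Icc (0:ℝ) 1 := hsub01 hp
  have hq01 : q ∈ Icc (0:ℝ) 1 := hsub01 hq
  have hEnd : eVariationOn f (Icc 0 1) < ⊤ :=
    (hJ 1 ⟨zero_le_one, le_rfl⟩).trans_lt ENNReal.ofReal_lt_top
  set g : ℝ → X := fun r => f (p + r * (q - p)) with hg_def
  have haffcont : ContinuousOn (fun r : ℝ => p + r * (q - p)) (Icc 0 1) :=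
    (continuous_const.add (continuous_id.mul continuous_const)).continuousOn
  rcases le_total p q with hpq | hpq
  · -- p ≤ q : monotone parametrization
    have haffmem : ∀ r ∈ Icc (0:ℝ) 1, p + r * (q - p) ∈ Icc p q := by
      intro r hr
      constructor
      · nlinarith [hr.1, hr.2]
      · nlinarith [hr.1, hr.2]
    have hIccpq : Icc p q ⊆ Icc (0:ℝ) 1 := Icc_subset_Icc hp01.1 hq01.2
    have hmapsTo : MapsTo (fun r : ℝ => p + r * (q - p)) (Icc 0 1) (Icc 0 1) :=
      fun r hr => hIccpq (haffmem r hr)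
    have hgcont : ContinuousOn g (Icc 0 1) := hf.cont.comp haffcont hmapsTo
    have hgcurve : IsCurveIn D g (f p) (f q) := by
      refine ⟨hgcont, fun r hr => hf.mem _ (hmapsTo hr), ?_, ?_⟩
      · show f (p + 0 * (q - p)) = f p; norm_num
      · show f (p + 1 * (q - p)) = f q; congr 1; ring
    have hmonoAff : MonotoneOn (fun r : ℝ => p + r * (q - p)) (Icc 0 1) := by
      intro x _ y _ hxy
      have : x * (q - p) ≤ y * (q - p) := mul_le_mul_of_nonneg_right hxy (by linarith)
      simpa using this
    have hgvar : eVariationOn g (Icc 0 1) < ⊤ :=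
      lt_of_le_of_lt (eVariationOn.comp_le_of_monotoneOn f _ hmonoAff hmapsTo) hEnd
    have hq1 : qhDist D (f p) (f q) ≤ qhVariationOn D g (Icc 0 1) := by
      unfold qhDist
      exact iInf₂_le g ⟨hgcurve, hgvar⟩
    refine hq1.trans ?_
    unfold qhVariationOn
    apply iSup_le
    rintro ⟨n, u, hu, humem⟩
    exact carrot_sum_le hD hne ha hf.mem hJ hp01.1 hpq hq01.2
      (hphi p q hp hq hpq) n (fun i => p + u i * (q - p))
      (fun i j hij => by
        have : u i * (q - p) ≤ u j * (q - p) :=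
          mul_le_mul_of_nonneg_right (hu hij) (by linarith)
        simpa using this)
      (fun i => haffmem (u i) (humem i))
  · -- q ≤ p : antitone parametrization
    have haffmem : ∀ r ∈ Icc (0:ℝ) 1, p + r * (q - p) ∈ Icc q p := by
      intro r hr
      constructor
      · nlinarith [hr.1, hr.2]
      · nlinarith [hr.1, hr.2]
    have hIccqp : Icc q p ⊆ Icc (0:ℝ) 1 := Icc_subset_Icc hq01.1 hp01.2
    have hmapsTo : MapsTo (fun r : ℝ => p + r * (q - p)) (Icc 0 1) (Icc 0 1) :=
      fun r hr => hIccqp (haffmem r hr)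
    have hgcont : ContinuousOn g (Icc 0 1) := hf.cont.comp haffcont hmapsTo
    have hgcurve : IsCurveIn D g (f p) (f q) := by
      refine ⟨hgcont, fun r hr => hf.mem _ (hmapsTo hr), ?_, ?_⟩
      · show f (p + 0 * (q - p)) = f p; norm_num
      · show f (p + 1 * (q - p)) = f q; congr 1; ring
    have hantiAff : AntitoneOn (fun r : ℝ => p + r * (q - p)) (Icc 0 1) := by
      intro x _ y _ hxy
      have : y * (q - p) ≤ x * (q - p) := mul_le_mul_of_nonpos_right hxy (by linarith)
      simpa using this
    have hgvar : eVariationOn g (Icc 0 1) < ⊤ :=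
      lt_of_le_of_lt (eVariationOn.comp_le_of_antitoneOn f _ hantiAff hmapsTo) hEnd
    have hq1 : qhDist D (f p) (f q) ≤ qhVariationOn D g (Icc 0 1) := by
      unfold qhDist
      exact iInf₂_le g ⟨hgcurve, hgvar⟩
    refine hq1.trans ?_
    unfold qhVariationOn
    apply iSup_le
    rintro ⟨n, u, hu, humem⟩
    exact carrot_sum_le_antitone hD hne ha hf.mem hJ hq01.1 hpq hp01.2
      (hphi q p hq hp hpq) n (fun i => p + u i * (q - p))
      (fun i j hij => by
        have : u j * (q - p) ≤ u i * (q - p) :=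
          mul_le_mul_of_nonpos_right (hu hij) (by linarith)
        simpa using this)
      (fun i => haffmem (u i) (humem i))
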